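/- arXiv:2003.03105 — 2 statements merged into one kernel-verified Lean document; each statement's English description precedes it below -/
import Mathlib

section
/- Let A, B be (N+1)×(N+1) Hermitian matrices with A positive semidefinite and B positive definite, and let λ_B be the maximum eigenvalue of B. Then for all v, v₀ ∈ ℂ^{N+1} with all components of unit modulus, (vᴴ A v)/(vᴴ B v) ≥ 2·Re(wᴴ v) + d, where wᴴ = (v₀ᴴ A)/(v₀ᴴ B v₀) − v₀ᴴ(B − λ_B·I)·(v₀ᴴ A v₀)/(v₀ᴴ B v₀)² and d = −[2·λ_B·(N+1) − v₀ᴴ B v₀]·(v₀ᴴ A v₀)/(v₀ᴴ B v₀)². -/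
open Matrix ComplexOrder


-- convexity of |x|^2/y
lemma aux_convex (x x₀ : ℂ) (y y₀ : ℝ) (hy : 0 < y) (hy₀ : 0 < y₀) :
    2 * ((starRingEnd ℂ) x₀ * x).re / y₀ - Complex.normSq x₀ * y / y₀ ^ 2
      ≤ Complex.normSq x / y := by
  have h1 : ((starRingEnd ℂ) x₀ * x).re ≤ ‖x₀‖ * ‖x‖ := by
    calc ((starRingEnd ℂ) x₀ * x).re ≤ ‖(starRingEnd ℂ) x₀ * x‖ :=
          Complex.re_le_norm _
      _ = ‖x₀‖ * ‖x‖ := by rw [norm_mul, Complex.norm_conj]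
  have h2 : Complex.normSq x = (‖x‖) ^ 2 := (Complex.sq_norm x).symm
  have h3 : Complex.normSq x₀ = (‖x₀‖) ^ 2 := (Complex.sq_norm x₀).symm
  rw [← sub_nonneg]
  have key : Complex.normSq x / y -
      (2 * ((starRingEnd ℂ) x₀ * x).re / y₀ - Complex.normSq x₀ * y / y₀ ^ 2) =
      ((‖x‖ * y₀ - ‖x₀‖ * y) ^ 2 +
        2 * (‖x₀‖ * ‖x‖ - ((starRingEnd ℂ) x₀ * x).re) * y * y₀) /
        (y * y₀ ^ 2) := by
    rw [h2, h3]; field_simp; ring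
  rw [key]
  apply div_nonneg
  · have h4 : 0 ≤ 2 * (‖x₀‖ * ‖x‖ - ((starRingEnd ℂ) x₀ * x).re) * y * y₀ := by
      have h5 : 0 ≤ ‖x₀‖ * ‖x‖ - ((starRingEnd ℂ) x₀ * x).re := by linarith
      positivity
    linarith [sq_nonneg (‖x‖ * y₀ - ‖x₀‖ * y)]
  · positivity

lemma aux_psd {n : Type*} [Fintype n] [DecidableEq n] {B : Matrix n n ℂ}
    (hB : B.IsHermitian) {lB : ℝ} (hl : ∀ i, hB.eigenvalues i ≤ lB) :
    ((lB : ℂ) • 1 - B).PosSemidef := by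
  have hU : (hB.eigenvectorUnitary : Matrix n n ℂ) *
      star (hB.eigenvectorUnitary : Matrix n n ℂ) = 1 :=
    (Matrix.mem_unitaryGroup_iff).mp (hB.eigenvectorUnitary).2
  have key : (lB : ℂ) • 1 - B =
      (hB.eigenvectorUnitary : Matrix n n ℂ) *
        Matrix.diagonal (fun i => ((lB - hB.eigenvalues i : ℝ) : ℂ)) *
        (star (hB.eigenvectorUnitary : Matrix n n ℂ)) := by
    conv_lhs => rw [hB.spectral_theorem]
    rw [Unitary.conjStarAlgAut_apply]
    rw [show ((lB : ℂ) • (1 : Matrix n n ℂ)) =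
        (hB.eigenvectorUnitary : Matrix n n ℂ) * ((lB : ℂ) • 1) *
          star (hB.eigenvectorUnitary : Matrix n n ℂ) by
      rw [Matrix.mul_smul, Matrix.mul_one, Matrix.smul_mul, hU]]
    rw [← Matrix.sub_mul, ← Matrix.mul_sub]
    congr 2
    rw [Matrix.smul_one_eq_diagonal, Matrix.diagonal_sub]
    congr 1
    ext i
    simp
  rw [key]
  refine (Matrix.posSemidef_diagonal_iff.mpr fun i => ?_).mul_mul_conjTranspose_same _
  exact Complex.zero_le_real.mpr (by linarith [hl i])

lemma aux_herm_re {n : Type*} [Fintype n] {M : Matrix n n ℂ} (hM : M.IsHermitian)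
    (a b : n → ℂ) : (star a ⬝ᵥ M *ᵥ b).re = (star b ⬝ᵥ M *ᵥ a).re := by
  have : star a ⬝ᵥ M *ᵥ b = star (star b ⬝ᵥ M *ᵥ a) := by
    rw [star_dotProduct, star_mulVec, ← Matrix.dotProduct_mulVec, hM.eq]
  rw [this, Complex.star_def, Complex.conj_re]


/-- Lemma 1 of the paper: a linear (surrogate) lower bound on the generalized Rayleigh
quotient `(vᴴ A v)/(vᴴ B v)` for unit-modulus vectors, where `A = h hᴴ` is positive
semidefinite rank one and `B` is Hermitian positive definite with maximum eigenvalue `lB`. -/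
theorem rayleigh_quotient_linear_lower_bound {N : ℕ}
    (h : Fin (N + 1) → ℂ)
    (A B : Matrix (Fin (N + 1)) (Fin (N + 1)) ℂ)
    (hA : A = vecMulVec h (star h)) (hApsd : A.PosSemidef)
    (hBpd : B.PosDef)
    (lB : ℝ) (hlB : IsGreatest (Set.range hBpd.isHermitian.eigenvalues) lB)
    (v v₀ : Fin (N + 1) → ℂ)
    (hv : ∀ n, ‖v n‖ = 1) (hv₀ : ∀ n, ‖v₀ n‖ = 1)
    (wH : Fin (N + 1) → ℂ)
    (hwH : wH = (star v₀ ⬝ᵥ B.mulVec v₀)⁻¹ • (vecMul (star v₀) A)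
        - ((star v₀ ⬝ᵥ A.mulVec v₀) / (star v₀ ⬝ᵥ B.mulVec v₀) ^ 2) •
            vecMul (star v₀) (B - (lB : ℂ) • 1))
    (d : ℝ)
    (hd : d = -(2 * lB * (N + 1) - (star v₀ ⬝ᵥ B.mulVec v₀).re) *
        ((star v₀ ⬝ᵥ A.mulVec v₀).re / ((star v₀ ⬝ᵥ B.mulVec v₀).re) ^ 2)) :
    (star v ⬝ᵥ A.mulVec v).re / (star v ⬝ᵥ B.mulVec v).re
      ≥ 2 * (wH ⬝ᵥ v).re + d := by
  classical
  have hBH := hBpd.isHermitian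
  -- v and v₀ are nonzero
  have hvne : v ≠ 0 := by
    intro hz; have := hv 0; rw [hz] at this; simp at this
  have hv₀ne : v₀ ≠ 0 := by
    intro hz; have := hv₀ 0; rw [hz] at this; simp at this
  -- B-quadratic forms are real and positive
  have hyvc := hBpd.dotProduct_mulVec_pos hvne
  have hy₀c := hBpd.dotProduct_mulVec_pos hv₀ne
  rw [Complex.lt_def] at hyvc hy₀c
  have hy : 0 < (star v ⬝ᵥ B.mulVec v).re := by simpa using hyvc.1
  have hy₀ : 0 < (star v₀ ⬝ᵥ B.mulVec v₀).re := by simpa using hy₀c.1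
  have hyeq : (star v ⬝ᵥ B.mulVec v) = ((star v ⬝ᵥ B.mulVec v).re : ℂ) :=
    Complex.ext rfl (by simpa using hyvc.2.symm)
  have hy₀eq : (star v₀ ⬝ᵥ B.mulVec v₀) = ((star v₀ ⬝ᵥ B.mulVec v₀).re : ℂ) :=
    Complex.ext rfl (by simpa using hy₀c.2.symm)
  set y : ℝ := (star v ⬝ᵥ B.mulVec v).re with hydef
  set y₀ : ℝ := (star v₀ ⬝ᵥ B.mulVec v₀).re with hy₀def
  -- A-quadratic forms
  set x : ℂ := star h ⬝ᵥ v with hxdef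
  set x₀ : ℂ := star h ⬝ᵥ v₀ with hx₀def
  have hstar : ∀ a : Fin (N + 1) → ℂ,
      star a ⬝ᵥ h = (starRingEnd ℂ) (star h ⬝ᵥ a) := by
    intro a
    simp [dotProduct, map_sum, mul_comm]
  have hAdot : ∀ a b : Fin (N + 1) → ℂ,
      star a ⬝ᵥ A.mulVec b = (starRingEnd ℂ) (star h ⬝ᵥ a) * (star h ⬝ᵥ b) := by
    intro a b
    rw [hA]
    have hmv : (vecMulVec h (star h)).mulVec b = (star h ⬝ᵥ b) • h := by
      ext i
      simp [vecMulVec_apply, mulVec, dotProduct, Finset.mul_sum, mul_comm, mul_assoc,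
        mul_left_comm]
    rw [hmv, dotProduct_smul, hstar a, smul_eq_mul, mul_comm]
  have hAvv : star v ⬝ᵥ A.mulVec v = (Complex.normSq x : ℂ) := by
    rw [hAdot, Complex.normSq_eq_conj_mul_self]
  have hAv₀v₀ : star v₀ ⬝ᵥ A.mulVec v₀ = (Complex.normSq x₀ : ℂ) := by
    rw [hAdot, Complex.normSq_eq_conj_mul_self]
  have hAv₀v : star v₀ ⬝ᵥ A.mulVec v = (starRingEnd ℂ) x₀ * x := hAdot v₀ v
  set a : ℝ := Complex.normSq x with hadef
  set a₀ : ℝ := Complex.normSq x₀ with ha₀def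
  -- norms of unit-modulus vectors
  have hnorm : ∀ (u : Fin (N + 1) → ℂ), (∀ n, ‖u n‖ = 1) →
      star u ⬝ᵥ u = ((N + 1 : ℝ) : ℂ) := by
    intro u hu
    have h1 : ∀ n, (starRingEnd ℂ) (u n) * u n = 1 := by
      intro n
      rw [← Complex.normSq_eq_conj_mul_self, ← Complex.sq_norm, hu n]
      norm_num
    simp [dotProduct, h1]
  -- the matrix lB • 1 - B is PSD
  have hM : ((lB : ℂ) • 1 - B).PosSemidef := by
    refine aux_psd hBH fun i => ?_
    exact hlB.2 ⟨i, rfl⟩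
  set M : Matrix (Fin (N + 1)) (Fin (N + 1)) ℂ := (lB : ℂ) • 1 - B with hMdef
  have hMdot : ∀ a b : Fin (N + 1) → ℂ,
      star a ⬝ᵥ M.mulVec b = (lB : ℂ) * (star a ⬝ᵥ b) - star a ⬝ᵥ B.mulVec b := by
    intro a b
    rw [hMdef, Matrix.sub_mulVec, Matrix.smul_mulVec, Matrix.one_mulVec,
      dotProduct_sub, dotProduct_smul, smul_eq_mul]
  -- quadratic upper bound via max eigenvalue
  set s : ℝ := (star v₀ ⬝ᵥ (B - (lB : ℂ) • 1).mulVec v).re with hsdef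
  have hsM : (star v₀ ⬝ᵥ M.mulVec v).re = -s := by
    have heq : (B - (lB : ℂ) • 1) = -M := by rw [hMdef, neg_sub]
    rw [hsdef, heq]
    simp [Matrix.neg_mulVec]
  have hII : y ≤ 2 * s + 2 * lB * (N + 1) - y₀ := by
    have h0 := hM.dotProduct_mulVec_nonneg (v - v₀)
    rw [Complex.le_def] at h0
    have h0r : 0 ≤ (star (v - v₀) ⬝ᵥ M.mulVec (v - v₀)).re := by simpa using h0.1
    have hexp : star (v - v₀) ⬝ᵥ M.mulVec (v - v₀) =
        star v ⬝ᵥ M.mulVec v - star v ⬝ᵥ M.mulVec v₀ - star v₀ ⬝ᵥ M.mulVec v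
          + star v₀ ⬝ᵥ M.mulVec v₀ := by
      rw [star_sub, Matrix.mulVec_sub, sub_dotProduct, dotProduct_sub, dotProduct_sub]
      ring
    have hsym : (star v ⬝ᵥ M.mulVec v₀).re = (star v₀ ⬝ᵥ M.mulVec v).re :=
      aux_herm_re hM.1 v v₀
    have hMvv : (star v ⬝ᵥ M.mulVec v).re = lB * (N + 1) - y := by
      rw [hMdot, hnorm v hv]
      simp [Complex.sub_re, Complex.re_ofReal_mul]
      rfl
    have hMv₀v₀ : (star v₀ ⬝ᵥ M.mulVec v₀).re = lB * (N + 1) - y₀ := by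
      rw [hMdot, hnorm v₀ hv₀]
      simp [Complex.sub_re, Complex.re_ofReal_mul]
      rfl
    rw [hexp] at h0r
    simp only [Complex.add_re, Complex.sub_re] at h0r
    rw [hMvv, hMv₀v₀, hsym, hsM] at h0r
    linarith
  -- compute wH ⬝ᵥ v
  have hwv : (wH ⬝ᵥ v).re = ((starRingEnd ℂ) x₀ * x).re / y₀ - (a₀ / y₀ ^ 2) * s := by
    rw [hwH]
    rw [sub_dotProduct, smul_dotProduct, smul_dotProduct,
      ← Matrix.dotProduct_mulVec, ← Matrix.dotProduct_mulVec]
    rw [hAv₀v, hAv₀v₀, hy₀eq]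
    rw [show (((star v₀ ⬝ᵥ B.mulVec v₀).re : ℂ))⁻¹ = ((y₀⁻¹ : ℝ) : ℂ) by
      rw [← hy₀def]; push_cast; ring]
    rw [show ((Complex.normSq x₀ : ℂ) / ((y₀ : ℝ) : ℂ) ^ 2) = ((a₀ / y₀ ^ 2 : ℝ) : ℂ) by
      rw [← ha₀def]; push_cast; ring]
    simp only [smul_eq_mul, Complex.sub_re, Complex.re_ofReal_mul]
    rw [← hsdef]
    field_simp
  -- convexity bound
  have hconv := aux_convex x x₀ y y₀ hy hy₀
  have hcoef : 0 ≤ a₀ / y₀ ^ 2 := div_nonneg (Complex.normSq_nonneg x₀) (sq_nonneg y₀)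
  have hmul := mul_le_mul_of_nonneg_left hII hcoef
  -- finish
  rw [ge_iff_le, hwv, hd, hAvv, hAv₀v₀]
  simp only [Complex.ofReal_re]
  rw [← hadef, ← ha₀def] at hconv
  clear_value y y₀ x x₀ a a₀ M s
  push_cast
  ring_nf
  ring_nf at hconv hmul
  linarith [hconv, hmul]
end

section
/- Let w_ss, w_pp ∈ ℂ^{N+1}, λ ≥ 0, and consider maximizing 2·Re(w_ssᴴ u) over u ∈ ℂ^{N+1} with |u_n| ≤ 1 for all n, subject to 2·Re(w_ppᴴ u) + d_pp ≥ γ_th. If u★ with components u★_n = exp(i·arg(w_ss(n) + λ·w_pp(n))) is feasible and λ·(2·Re(w_ppᴴ u★) + d_pp − γ_th) = 0, then u★ is optimal, and moreover every component of u★ has unit modulus. -/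
open Matrix

/-- Proposition 1: the phase-aligned point `u★` with `u★_n = exp(i·arg(w_ss(n) + λ·w_pp(n)))`
is optimal for the relaxed problem (P2.3) when it is feasible and satisfies complementary
slackness, and all its components have unit modulus. -/
theorem relaxed_problem_optimal_solution {N : ℕ}
    (wss wpp : Fin (N + 1) → ℂ) (lam dpp γth : ℝ) (hlam : 0 ≤ lam)
    (hne : ∀ n, wss n + (lam : ℂ) * wpp n ≠ 0)
    (ustar : Fin (N + 1) → ℂ)
    (hustar : ∀ n, ustar n = Complex.exp (Complex.I * ((wss n + (lam : ℂ) * wpp n).arg : ℂ)))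
    (hfeas : 2 * (star wpp ⬝ᵥ ustar).re + dpp ≥ γth)
    (hslack : lam * (2 * (star wpp ⬝ᵥ ustar).re + dpp - γth) = 0) :
    (∀ u : Fin (N + 1) → ℂ, (∀ n, ‖u n‖ ≤ 1) →
        2 * (star wpp ⬝ᵥ u).re + dpp ≥ γth →
        2 * (star wss ⬝ᵥ u).re ≤ 2 * (star wss ⬝ᵥ ustar).re) ∧
      (∀ n, ‖ustar n‖ = 1) := by
  set v : Fin (N + 1) → ℂ := fun n => wss n + (lam : ℂ) * wpp n with hv
  have habs : ∀ n, ‖ustar n‖ = 1 := by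
    intro n
    rw [hustar n, Complex.norm_exp]
    norm_num [Complex.mul_re, Complex.I_re, Complex.I_im, Complex.ofReal_re, Complex.ofReal_im]
  -- conj (v n) * ustar n = |v n|
  have hkey : ∀ n, (starRingEnd ℂ) (v n) * ustar n = (‖v n‖ : ℂ) := by
    intro n
    have hne' : v n ≠ 0 := hne n
    have habsne : (‖v n‖ : ℂ) ≠ 0 := by
      simpa using (norm_ne_zero_iff.mpr hne')
    have h := Complex.norm_mul_exp_arg_mul_I (v n)
    have hexp : Complex.exp (Complex.I * ((v n).arg : ℂ)) = v n / (‖v n‖ : ℂ) := by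
      rw [mul_comm]
      exact (eq_div_iff habsne).mpr (by rw [mul_comm]; exact h)
    rw [hustar n]
    show (starRingEnd ℂ) (v n) * Complex.exp (Complex.I * ((v n).arg : ℂ)) = _
    rw [hexp, div_eq_mul_inv, ← mul_assoc, Complex.conj_mul']
    rw [show ((‖v n‖ : ℂ) ^ 2 : ℂ) = (‖v n‖ : ℂ) * (‖v n‖ : ℂ) by
      ring]
    rw [mul_assoc, mul_inv_cancel₀ habsne, mul_one]
  -- dot product splits
  have hdot : ∀ w : Fin (N + 1) → ℂ,
      star v ⬝ᵥ w = star wss ⬝ᵥ w + (lam : ℂ) * (star wpp ⬝ᵥ w) := by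
    intro w
    simp only [dotProduct, Finset.mul_sum, ← Finset.sum_add_distrib]
    refine Finset.sum_congr rfl fun n _ => ?_
    simp only [Pi.star_apply, hv, star_add, star_mul', Complex.star_def,
      Complex.conj_ofReal]
    ring
  have hre : ∀ w : Fin (N + 1) → ℂ,
      (star v ⬝ᵥ w).re = (star wss ⬝ᵥ w).re + lam * (star wpp ⬝ᵥ w).re := by
    intro w
    rw [hdot w]
    simp [Complex.add_re, Complex.mul_re]
  -- value at ustar
  have h2 : (star v ⬝ᵥ ustar).re = ∑ n, ‖v n‖ := by
    simp only [dotProduct, Pi.star_apply, Complex.star_def, hkey]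
    rw [Complex.re_sum]
    simp
  constructor
  · intro u hub hufeas
    have h1 : (star v ⬝ᵥ u).re ≤ ∑ n, ‖v n‖ := by
      simp only [dotProduct, Pi.star_apply, Complex.star_def, Complex.re_sum]
      refine Finset.sum_le_sum fun n _ => ?_
      calc ((starRingEnd ℂ) (v n) * u n).re ≤ ‖(starRingEnd ℂ) (v n) * u n‖ :=
            Complex.re_le_norm _
        _ = ‖v n‖ * ‖u n‖ := by
            rw [norm_mul, Complex.norm_conj]
        _ ≤ ‖v n‖ * 1 := by
            exact mul_le_mul_of_nonneg_left (hub n) (norm_nonneg _)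
        _ = ‖v n‖ := mul_one _
    have hmain : (star wss ⬝ᵥ u).re + lam * (star wpp ⬝ᵥ u).re ≤
        (star wss ⬝ᵥ ustar).re + lam * (star wpp ⬝ᵥ ustar).re := by
      rw [← hre u, ← hre ustar, h2]; exact h1
    nlinarith [mul_nonneg hlam (sub_nonneg.mpr hufeas)]
  · exact habs
end
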